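/- arXiv:1011.5986 — 2 statements merged into one kernel-verified Lean document; each statement's English description precedes it below -/
import Mathlib

section
/- Let 1 ≤ p ≤ ∞ and let q be the conjugate exponent (q = 1 for p = ∞). Then the dual cone of L^p_d(K_T) in L^q_d equals L^q_d(K_T^+), i.e., {Y ∈ L^q_d : E[XᵀY] ≥ 0 for all X ∈ L^p_d(K_T)} = {Y ∈ L^q_d : Y(ω) ∈ [K_T(ω)]^+ P-a.s.}. -/
open MeasureTheory Set Filter Topology Pointwise ENNReal

noncomputable section

/-- `ℝ^d` -/
abbrev Vec (d : ℕ) := Fin d → ℝ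

/-- the Euclidean dot (bilinear) pairing `vᵀu` on `ℝ^d` -/
def dotp {d : ℕ} (v u : Vec d) : ℝ := ∑ i, v i * u i

/-- the nonnegative orthant `ℝ^d_+` -/
def posOrthant (d : ℕ) : Set (Vec d) := {x | ∀ i, 0 ≤ x i}

/-- the (positive) dual cone of a set `C ⊆ ℝ^d` -/
def posDual {d : ℕ} (C : Set (Vec d)) : Set (Vec d) := {v | ∀ x ∈ C, 0 ≤ dotp v x}

/-- the orthogonal complement `M^⊥` of a subspace -/
def perpSet {d : ℕ} (M : Submodule ℝ (Vec d)) : Set (Vec d) := {v | ∀ u ∈ M, dotp v u = 0}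

/-- the half space `G(w) = {x : wᵀx ≥ 0}` -/
def Gset {d : ℕ} (w : Vec d) : Set (Vec d) := {x | 0 ≤ dotp w x}

/-- a closed convex cone `K` with `ℝ^d_+ ⊆ K ≠ ℝ^d` (a solvency cone) -/
def IsSolvencyCone {d : ℕ} (K : Set (Vec d)) : Prop :=
  IsClosed K ∧ Convex ℝ K ∧ (∀ t : ℝ, 0 < t → ∀ x ∈ K, t • x ∈ K) ∧
    posOrthant d ⊆ K ∧ K ≠ univ

variable {Ω : Type*} [MeasurableSpace Ω]

/-- the constant (deterministic) random vector `u𝟙 ∈ L^p_d` -/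
def constLp (μ : Measure Ω) [IsFiniteMeasure μ] (d : ℕ) (p : ℝ≥0∞) (u : Vec d) :
    Lp (Vec d) p μ := MeasureTheory.Lp.const p μ u

/-- the cone `(L^p_d)_+` of a.s. componentwise nonnegative elements of `L^p_d` -/
def LpNonneg (μ : Measure Ω) [IsFiniteMeasure μ] (d : ℕ) (p : ℝ≥0∞) :
    Set (Lp (Vec d) p μ) := {X | ∀ᵐ ω ∂μ, ∀ i, 0 ≤ X ω i}

/-- an acceptance set in `L^p_d` -/
def IsAcceptanceSet {μ : Measure Ω} [IsFiniteMeasure μ] {d : ℕ} {p : ℝ≥0∞}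
    (A : Set (Lp (Vec d) p μ)) : Prop :=
  (∃ x : Vec d, constLp μ d p x ∈ A) ∧ (∃ x : Vec d, constLp μ d p x ∉ A) ∧
    ∀ X ∈ A, ∀ Y ∈ LpNonneg μ d p, X + Y ∈ A

/-- the function `R_A` induced by a set `A ⊆ L^p_d` -/
def RA {μ : Measure Ω} [IsFiniteMeasure μ] {d : ℕ} {p : ℝ≥0∞} (M : Submodule ℝ (Vec d))
    (A : Set (Lp (Vec d) p μ)) (X : Lp (Vec d) p μ) : Set (Vec d) :=
  {u | u ∈ M ∧ X + constLp μ d p u ∈ A}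

/-- the acceptance set `A_R` induced by a function `R` -/
def AR {μ : Measure Ω} {d : ℕ} {p : ℝ≥0∞} (R : Lp (Vec d) p μ → Set (Vec d)) :
    Set (Lp (Vec d) p μ) := {X | 0 ∈ R X}

/-- `R` is translative in `M`: `R(X + u𝟙) = R(X) − u` for `u ∈ M` -/
def MTranslative {μ : Measure Ω} [IsFiniteMeasure μ] {d : ℕ} {p : ℝ≥0∞}
    (M : Submodule ℝ (Vec d)) (R : Lp (Vec d) p μ → Set (Vec d)) : Prop :=
  ∀ X : Lp (Vec d) p μ, ∀ u ∈ M, R (X + constLp μ d p u) = (fun w => w - u) '' R X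

/-- `R` is `B`-monotone: `X² − X¹ ∈ B ⟹ R(X²) ⊇ R(X¹)` -/
def BMonotone {μ : Measure Ω} {d : ℕ} {p : ℝ≥0∞} (B : Set (Lp (Vec d) p μ))
    (R : Lp (Vec d) p μ → Set (Vec d)) : Prop :=
  ∀ X₁ X₂ : Lp (Vec d) p μ, X₂ - X₁ ∈ B → R X₁ ⊆ R X₂

/-- a (set-valued) risk measure: an `M`-translative, `(L^p_d)_+`-monotone function
mapping into the power set of `M` -/
def IsRiskMeasure {μ : Measure Ω} [IsFiniteMeasure μ] {d : ℕ} {p : ℝ≥0∞}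
    (M : Submodule ℝ (Vec d)) (R : Lp (Vec d) p μ → Set (Vec d)) : Prop :=
  (∀ X, R X ⊆ (M : Set (Vec d))) ∧ MTranslative M R ∧ BMonotone (LpNonneg μ d p) R

/-- `R` is finite at zero -/
def FiniteAtZero {μ : Measure Ω} {d : ℕ} {p : ℝ≥0∞} (M : Submodule ℝ (Vec d))
    (R : Lp (Vec d) p μ → Set (Vec d)) : Prop :=
  R 0 ≠ ∅ ∧ R 0 ≠ (M : Set (Vec d))

/-- measurability of a set-valued map -/
def MeasurableSetValued {d : ℕ} (K : Ω → Set (Vec d)) : Prop :=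
  ∀ B : Set (Vec d), IsOpen B → MeasurableSet {ω | (K ω ∩ B).Nonempty}

/-- `L^p_d(K) = {X ∈ L^p_d : X(ω) ∈ K(ω)` a.s.`}` -/
def LpSection (μ : Measure Ω) [IsFiniteMeasure μ] (d : ℕ) (p : ℝ≥0∞)
    (K : Ω → Set (Vec d)) : Set (Lp (Vec d) p μ) := {X | ∀ᵐ ω ∂μ, X ω ∈ K ω}


/-- the market model hypotheses on `K_T`: measurable set-valued map with solvency-cone
values -/
def IsMarketMapKT {d : ℕ} (KT : Ω → Set (Vec d)) : Prop :=
  MeasurableSetValued KT ∧ ∀ ω, IsSolvencyCone (KT ω)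

/-- `K_T`-compatibility of an acceptance set: `A + L^p_d(K_T) ⊆ A` -/
def KTcompatSet {μ : Measure Ω} [IsFiniteMeasure μ] {d : ℕ} {p : ℝ≥0∞}
    (KT : Ω → Set (Vec d)) (A : Set (Lp (Vec d) p μ)) : Prop :=
  ∀ X ∈ A, ∀ Y ∈ LpSection μ d p KT, X + Y ∈ A

/-- `K_I`-compatibility of an acceptance set: `A + K_I^M𝟙 ⊆ A` -/
def KIcompatSet {μ : Measure Ω} [IsFiniteMeasure μ] {d : ℕ} {p : ℝ≥0∞}
    (M : Submodule ℝ (Vec d)) (KI : Set (Vec d)) (A : Set (Lp (Vec d) p μ)) : Prop :=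
  ∀ X ∈ A, ∀ k ∈ KI ∩ (M : Set (Vec d)), X + constLp μ d p k ∈ A

/-- `K_T`-compatibility of a risk measure: `L^p_d(K_T)`-monotonicity -/
def KTcompatR {μ : Measure Ω} [IsFiniteMeasure μ] {d : ℕ} {p : ℝ≥0∞}
    (KT : Ω → Set (Vec d)) (R : Lp (Vec d) p μ → Set (Vec d)) : Prop :=
  BMonotone (LpSection μ d p KT) R

/-- `K_I`-compatibility of a risk measure: its values `D` satisfy `D = D + K_I^M` -/
def KIcompatR {μ : Measure Ω} {d : ℕ} {p : ℝ≥0∞}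
    (M : Submodule ℝ (Vec d)) (KI : Set (Vec d)) (R : Lp (Vec d) p μ → Set (Vec d)) :
    Prop :=
  ∀ X, R X + (KI ∩ (M : Set (Vec d))) = R X

/-- the bilinear pairing `(X,Y) ↦ E[XᵀY]` between `L^p_d` and `L^q_d` -/
def pairLp {μ : Measure Ω} {d : ℕ} {p q : ℝ≥0∞} (X : Lp (Vec d) p μ)
    (Y : Lp (Vec d) q μ) : ℝ := ∫ ω, dotp (X ω) (Y ω) ∂μ

/-- the componentwise expectation `E[Y] ∈ ℝ^d` -/
def meanVec {d : ℕ} {r : ℝ≥0∞} (μ : Measure Ω) (Y : Lp (Vec d) r μ) : Vec d :=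
  fun i => ∫ ω, Y ω i ∂μ


/-! ### Auxiliary lemmas for Statement 11 -/

section Aux

open Metric
open scoped Classical

lemma dotp_comm' {d : ℕ} (v u : Vec d) : dotp v u = dotp u v := by
  unfold dotp; exact Finset.sum_congr rfl fun i _ => mul_comm _ _

lemma dotp_zero_left {d : ℕ} (u : Vec d) : dotp 0 u = 0 := by
  unfold dotp; simp

lemma dotp_le_of_mem_closedBall {d : ℕ} (y x c : Vec d) {ρ : ℝ} (hρ : 0 ≤ ρ)
    (hx : x ∈ Metric.closedBall c ρ) :
    dotp y x ≤ dotp y c + ρ * ∑ i, |y i| := by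
  have hdist : ∀ i, |x i - c i| ≤ ρ := by
    intro i
    have := (dist_pi_le_iff hρ).mp (Metric.mem_closedBall.mp hx) i
    simpa [Real.dist_eq] using this
  have : dotp y x - dotp y c = ∑ i, y i * (x i - c i) := by
    unfold dotp; rw [← Finset.sum_sub_distrib]; exact Finset.sum_congr rfl fun i _ => by ring
  have hbound : ∑ i, y i * (x i - c i) ≤ ∑ i, |y i| * ρ := by
    apply Finset.sum_le_sum
    intro i _
    calc y i * (x i - c i) ≤ |y i * (x i - c i)| := le_abs_self _
      _ = |y i| * |x i - c i| := abs_mul _ _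
      _ ≤ |y i| * ρ := mul_le_mul_of_nonneg_left (hdist i) (abs_nonneg _)
  have := this ▸ hbound
  rw [← Finset.sum_mul] at this
  linarith [this]

variable {Ω : Type*} [MeasurableSpace Ω]

/-- Measurability of a dependent `Nat.find`. -/
lemma measurable_dfind {Q : ℕ → Ω → Prop} [∀ ω, DecidablePred fun k => Q k ω]
    [∀ ω, Decidable (∃ k, Q k ω)] (hQ : ∀ k, MeasurableSet {ω | Q k ω}) :
    Measurable (fun ω => if H : ∃ k, Q k ω then Nat.find H else 0) := by
  apply measurable_to_countable'
  intro k
  have hset : (fun ω => if H : ∃ k, Q k ω then Nat.find H else 0) ⁻¹' {k}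
      = ({ω | Q k ω} ∩ ⋂ j ∈ Finset.range k, {ω | Q j ω}ᶜ)
        ∪ ((⋂ j, {ω | Q j ω}ᶜ) ∩ {ω | k = 0}) := by
    ext ω
    by_cases H : ∃ j, Q j ω
    · simp only [Set.mem_preimage, Set.mem_singleton_iff, dif_pos H, Set.mem_union,
        Set.mem_inter_iff, Set.mem_setOf_eq, Set.mem_iInter, Set.mem_compl_iff,
        Finset.mem_range]
      constructor
      · intro hk
        left
        exact ⟨hk ▸ Nat.find_spec H, fun j hj => Nat.find_min H (hk ▸ hj)⟩
      · rintro (⟨h1, h2⟩ | ⟨h1, _⟩)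
        · exact le_antisymm (Nat.find_min' H h1)
            (le_of_not_gt fun hc => h2 _ hc (Nat.find_spec H))
        · exact absurd H (by push_neg; exact fun j => h1 j)
    · simp only [Set.mem_preimage, Set.mem_singleton_iff, dif_neg H, Set.mem_union,
        Set.mem_inter_iff, Set.mem_setOf_eq, Set.mem_iInter, Set.mem_compl_iff,
        Finset.mem_range]
      push_neg at H
      constructor
      · intro hk; right; exact ⟨fun j => H j, hk.symm⟩
      · rintro (⟨h1, _⟩ | ⟨_, h1⟩)
        · exact absurd h1 (H k)
        · exact h1.symm
  rw [hset]
  exact ((hQ k).inter (MeasurableSet.biInter (Set.to_countable _)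
      (fun j _ => (hQ j).compl))).union
    ((MeasurableSet.iInter (fun j => (hQ j).compl)).inter (MeasurableSet.const _))

/-- the approximating index sequence for the measurable selection -/
def selAux {d : ℕ} (K : Ω → Set (Vec d)) (D : ℕ → Vec d) (c : Vec d) (ρ : ℝ) :
    ℕ → Ω → ℕ
  | 0, ω => if H : ∃ k, (K ω ∩ (Metric.ball c ρ ∩ Metric.ball (D k) ((2:ℝ)⁻¹ ^ 0))).Nonempty
      then Nat.find H else 0
  | (n+1), ω => if H : ∃ k,
        (K ω ∩ (Metric.ball c ρ ∩ Metric.ball (D k) ((2:ℝ)⁻¹ ^ (n+1)))).Nonempty ∧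
        dist (D k) (D (selAux K D c ρ n ω)) < (2:ℝ)⁻¹ ^ (n+1) + (2:ℝ)⁻¹ ^ n
      then Nat.find H else 0

lemma selAux_measurable {d : ℕ} {K : Ω → Set (Vec d)} (hK : MeasurableSetValued K)
    (D : ℕ → Vec d) (c : Vec d) (ρ : ℝ) (n : ℕ) :
    Measurable (selAux K D c ρ n) := by
  induction n with
  | zero =>
      have heq : selAux K D c ρ 0 = fun ω =>
          if H : ∃ k, (K ω ∩ (Metric.ball c ρ ∩ Metric.ball (D k) ((2:ℝ)⁻¹ ^ 0))).Nonempty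
          then Nat.find H else 0 := by funext ω; rw [selAux]
      rw [heq]
      apply measurable_dfind
      intro k
      exact hK (Metric.ball c ρ ∩ Metric.ball (D k) ((2:ℝ)⁻¹ ^ 0))
        (isOpen_ball.inter isOpen_ball)
  | succ n ih =>
      have heq : selAux K D c ρ (n+1) = fun ω =>
          if H : ∃ k,
            (K ω ∩ (Metric.ball c ρ ∩ Metric.ball (D k) ((2:ℝ)⁻¹ ^ (n+1)))).Nonempty ∧
            dist (D k) (D (selAux K D c ρ n ω)) < (2:ℝ)⁻¹ ^ (n+1) + (2:ℝ)⁻¹ ^ n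
          then Nat.find H else 0 := by funext ω; rw [selAux]
      rw [heq]
      apply measurable_dfind
      intro k
      refine MeasurableSet.inter (hK (Metric.ball c ρ ∩ Metric.ball (D k) ((2:ℝ)⁻¹ ^ (n+1)))
        (isOpen_ball.inter isOpen_ball)) ?_
      exact ih (Set.to_countable
        {m : ℕ | dist (D k) (D m) < (2:ℝ)⁻¹ ^ (n+1) + (2:ℝ)⁻¹ ^ n}).measurableSet

lemma selAux_spec {d : ℕ} {K : Ω → Set (Vec d)} (D : ℕ → Vec d) (hD : DenseRange D)
    (c : Vec d) (ρ : ℝ) (ω : Ω) (hne : (K ω ∩ Metric.ball c ρ).Nonempty) (n : ℕ) :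
    (K ω ∩ (Metric.ball c ρ ∩
      Metric.ball (D (selAux K D c ρ n ω)) ((2:ℝ)⁻¹ ^ n))).Nonempty := by
  induction n with
  | zero =>
      obtain ⟨x, hxK, hxb⟩ := hne
      obtain ⟨k, hk⟩ := hD.exists_dist_lt x (by norm_num : (0:ℝ) < (2:ℝ)⁻¹ ^ 0)
      have H : ∃ k, (K ω ∩ (Metric.ball c ρ ∩ Metric.ball (D k) ((2:ℝ)⁻¹ ^ 0))).Nonempty :=
        ⟨k, x, hxK, hxb, Metric.mem_ball.mpr hk⟩
      rw [selAux, dif_pos H]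
      exact Nat.find_spec H
  | succ n ih =>
      obtain ⟨x, hxK, hxb, hxd⟩ := ih
      obtain ⟨k, hk⟩ := hD.exists_dist_lt x (by positivity : (0:ℝ) < (2:ℝ)⁻¹ ^ (n+1))
      have H : ∃ k, (K ω ∩ (Metric.ball c ρ ∩
          Metric.ball (D k) ((2:ℝ)⁻¹ ^ (n+1)))).Nonempty ∧
          dist (D k) (D (selAux K D c ρ n ω)) < (2:ℝ)⁻¹ ^ (n+1) + (2:ℝ)⁻¹ ^ n := by
        refine ⟨k, ⟨x, hxK, hxb, Metric.mem_ball.mpr hk⟩, ?_⟩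
        calc dist (D k) (D (selAux K D c ρ n ω))
            ≤ dist (D k) x + dist x (D (selAux K D c ρ n ω)) := dist_triangle _ _ _
          _ < (2:ℝ)⁻¹ ^ (n+1) + (2:ℝ)⁻¹ ^ n := by
              have h1 : dist (D k) x < (2:ℝ)⁻¹ ^ (n+1) := by rw [dist_comm]; exact hk
              have h2 : dist x (D (selAux K D c ρ n ω)) < (2:ℝ)⁻¹ ^ n :=
                Metric.mem_ball.mp hxd
              linarith
      rw [selAux, dif_pos H]
      exact (Nat.find_spec H).1

lemma selAux_dist {d : ℕ} {K : Ω → Set (Vec d)} (D : ℕ → Vec d) (hD : DenseRange D)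
    (c : Vec d) (ρ : ℝ) (ω : Ω) (hne : (K ω ∩ Metric.ball c ρ).Nonempty) (n : ℕ) :
    dist (D (selAux K D c ρ (n+1) ω)) (D (selAux K D c ρ n ω))
      < (2:ℝ)⁻¹ ^ (n+1) + (2:ℝ)⁻¹ ^ n := by
  obtain ⟨x, hxK, hxb, hxd⟩ := selAux_spec D hD c ρ ω hne n
  obtain ⟨k, hk⟩ := hD.exists_dist_lt x (by positivity : (0:ℝ) < (2:ℝ)⁻¹ ^ (n+1))
  have H : ∃ k, (K ω ∩ (Metric.ball c ρ ∩
      Metric.ball (D k) ((2:ℝ)⁻¹ ^ (n+1)))).Nonempty ∧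
      dist (D k) (D (selAux K D c ρ n ω)) < (2:ℝ)⁻¹ ^ (n+1) + (2:ℝ)⁻¹ ^ n := by
    refine ⟨k, ⟨x, hxK, hxb, Metric.mem_ball.mpr hk⟩, ?_⟩
    calc dist (D k) (D (selAux K D c ρ n ω))
        ≤ dist (D k) x + dist x (D (selAux K D c ρ n ω)) := dist_triangle _ _ _
      _ < (2:ℝ)⁻¹ ^ (n+1) + (2:ℝ)⁻¹ ^ n := by
          have h1 : dist (D k) x < (2:ℝ)⁻¹ ^ (n+1) := by rw [dist_comm]; exact hk
          have h2 : dist x (D (selAux K D c ρ n ω)) < (2:ℝ)⁻¹ ^ n := Metric.mem_ball.mp hxd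
          linarith
  rw [selAux, dif_pos H]
  exact (Nat.find_spec H).2

/-- A measurable selection of `ω ↦ K ω ∩ B(c,ρ)` (where nonempty). -/
lemma exists_measurable_selection {d : ℕ} {K : Ω → Set (Vec d)}
    (hK : MeasurableSetValued K) (hcl : ∀ ω, IsClosed (K ω)) (c : Vec d) (ρ : ℝ) :
    ∃ f : Ω → Vec d, Measurable f ∧
      ∀ ω, (K ω ∩ Metric.ball c ρ).Nonempty →
        f ω ∈ K ω ∧ f ω ∈ Metric.closedBall c ρ := by
  obtain ⟨D, hD⟩ := TopologicalSpace.exists_dense_seq (Vec d)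
  set G : Set Ω := {ω | (K ω ∩ Metric.ball c ρ).Nonempty} with hG
  have hGmeas : MeasurableSet G := hK _ isOpen_ball
  set F : ℕ → Ω → Vec d := fun n => G.indicator (fun ω => D (selAux K D c ρ n ω)) with hF
  have hFmeas : ∀ n, Measurable (F n) := fun n =>
    (measurable_from_top.comp (selAux_measurable hK D c ρ n)).indicator hGmeas
  have hcauchy : ∀ ω, CauchySeq (fun n => F n ω) := by
    intro ω
    by_cases hω : ω ∈ G
    · have : ∀ n, F n ω = D (selAux K D c ρ n ω) := fun n => Set.indicator_of_mem hω _
      apply cauchySeq_of_le_geometric (2:ℝ)⁻¹ 2 (by norm_num)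
      intro n
      rw [this, this, dist_comm]
      have := selAux_dist D hD c ρ ω hω n
      have h2 : (2:ℝ)⁻¹ ^ (n+1) + (2:ℝ)⁻¹ ^ n ≤ 2 * (2:ℝ)⁻¹ ^ n := by
        have : (2:ℝ)⁻¹ ^ (n+1) ≤ (2:ℝ)⁻¹ ^ n :=
          pow_le_pow_of_le_one (by norm_num) (by norm_num) (Nat.le_succ n)
        linarith
      linarith
    · have : ∀ n, F n ω = 0 := fun n => Set.indicator_of_notMem hω _
      simp only [this]
      exact cauchySeq_const 0
  have hconv : ∀ ω, ∃ l, Filter.Tendsto (fun n => F n ω) atTop (nhds l) := fun ω =>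
    cauchySeq_tendsto_of_complete (hcauchy ω)
  set f : Ω → Vec d := fun ω => limUnder atTop (fun n => F n ω) with hf
  have htend : ∀ ω, Filter.Tendsto (fun n => F n ω) atTop (nhds (f ω)) := fun ω =>
    tendsto_nhds_limUnder (hconv ω)
  refine ⟨f, measurable_of_tendsto_metrizable hFmeas
    (tendsto_pi_nhds.mpr htend), ?_⟩
  intro ω hω
  have hωG : ω ∈ G := hω
  have hFg : ∀ n, F n ω = D (selAux K D c ρ n ω) := fun n =>
    Set.indicator_of_mem hωG (fun w => D (selAux K D c ρ n w))
  -- a sequence in K ω ∩ ball c ρ converging to f ω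
  have hx : ∀ n : ℕ, ∃ x, x ∈ K ω ∩ Metric.ball c ρ ∧ dist x (F n ω) < (2:ℝ)⁻¹ ^ n := by
    intro n
    obtain ⟨x, hxK, hxb, hxd⟩ := selAux_spec D hD c ρ ω hω n
    exact ⟨x, ⟨hxK, hxb⟩, by rw [hFg]; exact Metric.mem_ball.mp hxd⟩
  choose x hxmem hxd using hx
  have hxt : Filter.Tendsto x atTop (nhds (f ω)) := by
    rw [tendsto_iff_dist_tendsto_zero]
    have hub : ∀ n, dist (x n) (f ω) ≤ (2:ℝ)⁻¹ ^ n + dist (F n ω) (f ω) := fun n =>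
      le_trans (dist_triangle _ (F n ω) _) (by linarith [le_of_lt (hxd n)])
    have h0 : Filter.Tendsto (fun n => (2:ℝ)⁻¹ ^ n + dist (F n ω) (f ω)) atTop (nhds 0) := by
      have h1 : Filter.Tendsto (fun n : ℕ => (2:ℝ)⁻¹ ^ n) atTop (nhds 0) :=
        tendsto_pow_atTop_nhds_zero_of_lt_one (by norm_num) (by norm_num)
      have h2 : Filter.Tendsto (fun n => dist (F n ω) (f ω)) atTop (nhds 0) :=
        (tendsto_iff_dist_tendsto_zero).mp (htend ω)
      simpa using h1.add h2
    exact squeeze_zero (fun n => dist_nonneg) hub h0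
  constructor
  · exact (hcl ω).mem_of_tendsto hxt (Filter.Eventually.of_forall fun n => (hxmem n).1)
  · have : f ω ∈ closure (Metric.ball c ρ) :=
      mem_closure_of_tendsto hxt (Filter.Eventually.of_forall fun n => (hxmem n).2)
    exact Metric.closure_ball_subset_closedBall this

end Aux

/-- The dual cone of `L^p_d(K_T)` in `L^q_d` is `L^q_d(K_T^+)`. -/
theorem dual_cone_of_LpKT
    (μ : Measure Ω) [IsProbabilityMeasure μ] (d : ℕ) (hd : 1 ≤ d)
    (p q : ℝ≥0∞) (hp : 1 ≤ p) (hpq : 1 / p + 1 / q = 1)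
    (KT : Ω → Set (Vec d)) (hKT : IsMarketMapKT KT) :
    {Y : Lp (Vec d) q μ | ∀ X ∈ LpSection μ d p KT, 0 ≤ pairLp X Y} =
      {Y : Lp (Vec d) q μ | ∀ᵐ ω ∂μ, Y ω ∈ posDual (KT ω)} := by
  classical
  obtain ⟨hKTmeas, hKTsolv⟩ := hKT
  have hKTclosed : ∀ ω, IsClosed (KT ω) := fun ω => (hKTsolv ω).1
  have h0KT : ∀ ω, (0 : Vec d) ∈ KT ω := fun ω =>
    (hKTsolv ω).2.2.2.1 (fun i => le_refl 0)
  have hq1 : (1:ℝ≥0∞) ≤ q := by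
    have h1 : 1 / q ≤ 1 / p + 1 / q := self_le_add_left _ _
    rw [hpq] at h1
    rwa [one_div, ENNReal.inv_le_one] at h1
  ext Y
  simp only [Set.mem_setOf_eq]
  constructor
  · intro hY
    have hYsm := Lp.aestronglyMeasurable Y
    set g : Ω → Vec d := hYsm.mk Y with hgdef
    have hgmeas : Measurable g := hYsm.stronglyMeasurable_mk.measurable
    have hYg : (Y : Ω → Vec d) =ᵐ[μ] g := hYsm.ae_eq_mk
    have hYint : Integrable (Y : Ω → Vec d) μ :=
      memLp_one_iff_integrable.mp ((Lp.memLp Y).mono_exponent hq1)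
    have hgint : Integrable g μ := hYint.congr hYg
    have hgi : ∀ i, Integrable (fun ω => g ω i) μ := fun i =>
      hgint.mono ((measurable_pi_apply i).comp hgmeas).aestronglyMeasurable
        (Filter.Eventually.of_forall fun ω => by
          simpa [Real.norm_eq_abs] using norm_le_pi_norm (g ω) i)
    have hSg_int : Integrable (fun ω => ∑ i, |g ω i|) μ :=
      integrable_finset_sum _ (fun i _ => (hgi i).abs)
    obtain ⟨D, hD⟩ := TopologicalSpace.exists_dense_seq (Vec d)
    set A : ℕ → ℕ → ℕ → Set Ω := fun k n m =>
      {ω | (KT ω ∩ Metric.ball (D k) (((n:ℝ)+1)⁻¹)).Nonempty} ∩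
      {ω | dotp (g ω) (D k) + ((n:ℝ)+1)⁻¹ * ∑ i, |g ω i| ≤ -(((m:ℝ)+1)⁻¹)} with hA
    have hAmeas : ∀ k n m, MeasurableSet (A k n m) := by
      intro k n m
      refine (hKTmeas _ Metric.isOpen_ball).inter ?_
      have hφ : Measurable (fun ω => dotp (g ω) (D k) + ((n:ℝ)+1)⁻¹ * ∑ i, |g ω i|) := by
        apply Measurable.add
        · unfold dotp
          exact Finset.measurable_sum _ fun i _ =>
            ((measurable_pi_apply i).comp hgmeas).mul_const _
        · exact (Finset.measurable_sum _ fun i _ =>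
            ((measurable_pi_apply i).comp hgmeas).abs).const_mul _
      exact measurableSet_le hφ measurable_const
    have hAnull : ∀ k n m, μ (A k n m) = 0 := by
      intro k n m
      by_contra hA0
      set c := D k with hc
      set ρ : ℝ := ((n:ℝ)+1)⁻¹ with hρdef
      have hρpos : 0 < ρ := by positivity
      set δ : ℝ := ((m:ℝ)+1)⁻¹ with hδdef
      have hδpos : 0 < δ := by positivity
      obtain ⟨f, hfmeas, hfsel⟩ := exists_measurable_selection hKTmeas hKTclosed c ρ
      have hfnorm : ∀ ω, ω ∈ A k n m → ‖f ω‖ ≤ ‖c‖ + ρ := by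
        intro ω hω
        have h1 : dist (f ω) c ≤ ρ := Metric.mem_closedBall.mp (hfsel ω hω.1).2
        calc ‖f ω‖ = dist (f ω) 0 := (dist_zero_right _).symm
          _ ≤ dist (f ω) c + dist c 0 := dist_triangle _ _ _
          _ ≤ ρ + ‖c‖ := by rw [dist_zero_right]; linarith
          _ = ‖c‖ + ρ := by ring
      set X : Ω → Vec d := (A k n m).indicator f with hXdef
      have hXKT : ∀ ω, X ω ∈ KT ω := by
        intro ω
        by_cases hω : ω ∈ A k n m
        · rw [hXdef, Set.indicator_of_mem hω]
          exact (hfsel ω hω.1).1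
        · rw [hXdef, Set.indicator_of_notMem hω]
          exact h0KT ω
      have hXbd : ∀ ω, ‖X ω‖ ≤ ‖c‖ + ρ := by
        intro ω
        by_cases hω : ω ∈ A k n m
        · rw [hXdef, Set.indicator_of_mem hω]; exact hfnorm ω hω
        · rw [hXdef, Set.indicator_of_notMem hω, norm_zero]; positivity
      have hXmeas : Measurable X := hfmeas.indicator (hAmeas k n m)
      have hXmem : MemLp X p μ :=
        (memLp_top_of_bound hXmeas.aestronglyMeasurable _
          (Filter.Eventually.of_forall hXbd)).mono_exponent le_top
      set Xlp := hXmem.toLp X with hXlp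
      have hXsec : Xlp ∈ LpSection μ d p KT := by
        show ∀ᵐ ω ∂μ, Xlp ω ∈ KT ω
        filter_upwards [hXmem.coeFn_toLp] with ω hω
        rw [hω]; exact hXKT ω
      have hpos := hY Xlp hXsec
      have hint_eq : pairLp Xlp Y = ∫ ω in A k n m, dotp (f ω) (g ω) ∂μ := by
        have h1 : pairLp Xlp Y = ∫ ω, dotp (X ω) (g ω) ∂μ := by
          unfold pairLp
          apply integral_congr_ae
          filter_upwards [hXmem.coeFn_toLp, hYg] with ω h1 h2
          rw [h1, h2]
        rw [h1]
        have h2 : (fun ω => dotp (X ω) (g ω))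
            = (A k n m).indicator (fun ω => dotp (f ω) (g ω)) := by
          funext ω
          by_cases hω : ω ∈ A k n m
          · rw [hXdef, Set.indicator_of_mem hω, Set.indicator_of_mem hω]
          · rw [hXdef, Set.indicator_of_notMem hω, Set.indicator_of_notMem hω,
              dotp_zero_left]
        rw [h2, integral_indicator (hAmeas k n m)]
      have hbound : ∀ ω ∈ A k n m, dotp (f ω) (g ω) ≤ -δ := by
        intro ω hω
        have h1 := dotp_le_of_mem_closedBall (g ω) (f ω) c hρpos.le (hfsel ω hω.1).2
        have h2 : dotp (g ω) c + ρ * ∑ i, |g ω i| ≤ -δ := hω.2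
        rw [dotp_comm']
        linarith
      have hintOn : IntegrableOn (fun ω => dotp (f ω) (g ω)) (A k n m) μ := by
        have hmeasd : Measurable (fun ω => dotp (f ω) (g ω)) := by
          unfold dotp
          exact Finset.measurable_sum _ fun i _ =>
            ((measurable_pi_apply i).comp hfmeas).mul ((measurable_pi_apply i).comp hgmeas)
        refine Integrable.mono ((hSg_int.const_mul (‖c‖ + ρ)).integrableOn)
          hmeasd.aestronglyMeasurable.restrict ?_
        rw [ae_restrict_iff' (hAmeas k n m)]
        apply Filter.Eventually.of_forall
        intro ω hω
        have hfb : ∀ i, |f ω i| ≤ ‖c‖ + ρ := fun i => by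
          have h1 := norm_le_pi_norm (f ω) i
          have h2 := hfnorm ω hω
          simp only [Real.norm_eq_abs] at h1
          linarith
        have hcalc : ‖dotp (f ω) (g ω)‖ ≤ (‖c‖ + ρ) * ∑ i, |g ω i| := by
          rw [Real.norm_eq_abs]
          calc |dotp (f ω) (g ω)| ≤ ∑ i, |f ω i * g ω i| :=
              Finset.abs_sum_le_sum_abs _ _
            _ = ∑ i, |f ω i| * |g ω i| := by
                exact Finset.sum_congr rfl fun i _ => abs_mul _ _
            _ ≤ ∑ i, (‖c‖ + ρ) * |g ω i| := by
                apply Finset.sum_le_sum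
                intro i _
                exact mul_le_mul_of_nonneg_right (hfb i) (abs_nonneg _)
            _ = (‖c‖ + ρ) * ∑ i, |g ω i| := by rw [Finset.mul_sum]
        calc ‖dotp (f ω) (g ω)‖ ≤ (‖c‖ + ρ) * ∑ i, |g ω i| := hcalc
          _ ≤ ‖(‖c‖ + ρ) * ∑ i, |g ω i|‖ := le_abs_self _
      have hfin : ∫ ω in A k n m, dotp (f ω) (g ω) ∂μ ≤ -δ * (μ (A k n m)).toReal := by
        calc ∫ ω in A k n m, dotp (f ω) (g ω) ∂μ ≤ ∫ _ω in A k n m, (-δ) ∂μ :=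
            setIntegral_mono_on hintOn
              (integrableOn_const (measure_ne_top μ _))
              (hAmeas k n m) hbound
          _ = (μ (A k n m)).toReal • (-δ) := setIntegral_const _
          _ = -δ * (μ (A k n m)).toReal := by rw [smul_eq_mul]; ring
      have htp : 0 < (μ (A k n m)).toReal :=
        ENNReal.toReal_pos hA0 (measure_ne_top μ _)
      rw [hint_eq] at hpos
      nlinarith [hpos, hfin, htp, hδpos]
    have hcover : {ω | g ω ∉ posDual (KT ω)} ⊆ ⋃ k, ⋃ n, ⋃ m, A k n m := by
      intro ω hω
      simp only [Set.mem_setOf_eq, posDual] at hω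
      push_neg at hω
      obtain ⟨x, hxKT, hxneg⟩ := hω
      set Sg := ∑ i, |g ω i| with hSgdef
      have hSg0 : 0 ≤ Sg := Finset.sum_nonneg fun i _ => abs_nonneg _
      have hεpos : 0 < -dotp (g ω) x := by linarith
      obtain ⟨n, hn⟩ := exists_nat_one_div_lt
        (show (0:ℝ) < (-dotp (g ω) x) / (2 * (Sg + 1)) by positivity)
      rw [one_div] at hn
      set ρ : ℝ := ((n:ℝ)+1)⁻¹ with hρdef
      have hρpos : 0 < ρ := by positivity
      obtain ⟨k, hk⟩ := hD.exists_dist_lt x hρpos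
      have hmul : ρ * (2 * (Sg + 1)) < -dotp (g ω) x :=
        (lt_div_iff₀ (by positivity)).mp hn
      have hφ : dotp (g ω) (D k) + ρ * Sg < 0 := by
        have h1 : dotp (g ω) (D k) ≤ dotp (g ω) x + ρ * Sg := by
          rw [hSgdef]
          apply dotp_le_of_mem_closedBall (g ω) (D k) x hρpos.le
          exact Metric.mem_closedBall.mpr (by rw [dist_comm]; exact hk.le)
        nlinarith
      obtain ⟨m, hm⟩ := exists_nat_one_div_lt
        (show (0:ℝ) < -(dotp (g ω) (D k) + ρ * Sg) by linarith)
      rw [one_div] at hm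
      refine Set.mem_iUnion.mpr ⟨k, Set.mem_iUnion.mpr ⟨n, Set.mem_iUnion.mpr ⟨m, ?_⟩⟩⟩
      constructor
      · exact ⟨x, hxKT, Metric.mem_ball.mpr hk⟩
      · show dotp (g ω) (D k) + ((n:ℝ)+1)⁻¹ * Sg ≤ -(((m:ℝ)+1)⁻¹)
        linarith
    have hnull : μ {ω | g ω ∉ posDual (KT ω)} = 0 :=
      measure_mono_null hcover
        (measure_iUnion_null fun k => measure_iUnion_null fun n =>
          measure_iUnion_null fun m => hAnull k n m)
    have hgae : ∀ᵐ ω ∂μ, g ω ∈ posDual (KT ω) := by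
      rw [ae_iff]; exact hnull
    filter_upwards [hgae, hYg] with ω h1 h2
    rw [show (Y : Ω → Vec d) ω = g ω from h2]
    exact h1
  · intro hY X hX
    have hX' : ∀ᵐ ω ∂μ, X ω ∈ KT ω := hX
    unfold pairLp
    apply integral_nonneg_of_ae
    filter_upwards [hX', hY] with ω h1 h2
    rw [dotp_comm']
    exact h2 _ h1
end
end

section
/- Let Â ⊆ L^p_d be an acceptance set and A = cl_M(Â + K_I^M𝟙). Then for every X ∈ L^p_d and every v ∈ K_I^+ the scalarizations coincide: φ_{R_A, v}(X) = φ_{R_Â, v}(X), where φ_{R, v}(X) = inf{vᵀu : u ∈ R(X)} (with inf ∅ = +∞). -/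
open MeasureTheory Set Filter Topology Pointwise ENNReal

noncomputable section

variable {Ω : Type*} [MeasurableSpace Ω]

/-- the directional closure `cl_M A` of `A ⊆ L^p_d` in `M` -/
def clM {μ : Measure Ω} [IsFiniteMeasure μ] {d : ℕ} {p : ℝ≥0∞}
    (M : Submodule ℝ (Vec d)) (A : Set (Lp (Vec d) p μ)) : Set (Lp (Vec d) p μ) :=
  {X | ∃ u : ℕ → Vec d, (∀ k, u k ∈ M) ∧ Tendsto u atTop (nhds 0) ∧
    ∀ k, X + constLp μ d p (u k) ∈ A}

/-- `A` is directionally closed in `M` -/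
def DirClosed {μ : Measure Ω} [IsFiniteMeasure μ] {d : ℕ} {p : ℝ≥0∞}
    (M : Submodule ℝ (Vec d)) (A : Set (Lp (Vec d) p μ)) : Prop :=
  ∀ (X : Lp (Vec d) p μ) (u : ℕ → Vec d), (∀ k, u k ∈ M) →
    Tendsto u atTop (nhds 0) → (∀ k, X + constLp μ d p (u k) ∈ A) → X ∈ A

/-- the scalarization `φ_{R,v}(X) = inf {vᵀu : u ∈ R(X)}` (in `ℝ ∪ {±∞}`, with
`inf ∅ = +∞`) -/
def scalarization {μ : Measure Ω} {d : ℕ} {p : ℝ≥0∞} (v : Vec d)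
    (R : Lp (Vec d) p μ → Set (Vec d)) (X : Lp (Vec d) p μ) : EReal :=
  sInf ((fun u => ((dotp v u : ℝ) : EReal)) '' R X)

lemma constLp_add {μ : Measure Ω} [IsFiniteMeasure μ] {d : ℕ} {p : ℝ≥0∞} (a b : Vec d) :
    constLp μ d p (a + b) = constLp μ d p a + constLp μ d p b :=
  (MeasureTheory.Lp.const p μ).map_add a b

lemma constLp_sub {μ : Measure Ω} [IsFiniteMeasure μ] {d : ℕ} {p : ℝ≥0∞} (a b : Vec d) :
    constLp μ d p (a - b) = constLp μ d p a - constLp μ d p b :=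
  (MeasureTheory.Lp.const p μ).map_sub a b

lemma dotp_add {d : ℕ} (v a b : Vec d) : dotp v (a + b) = dotp v a + dotp v b := by
  simp [dotp, mul_add, Finset.sum_add_distrib]

lemma dotp_sub {d : ℕ} (v a b : Vec d) : dotp v (a - b) = dotp v a - dotp v b := by
  simp [dotp, mul_sub, Finset.sum_sub_distrib]

/-- The scalarizations of `R_Â` and of `R_A`, where
`A = cl_M(Â + K_I^M𝟙)`, coincide for every `v ∈ K_I^+`. -/
theorem scalarization_of_augmented_acceptance_set
    (μ : Measure Ω) [IsProbabilityMeasure μ] (d : ℕ) (hd : 1 ≤ d) (p : ℝ≥0∞)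
    (M : Submodule ℝ (Vec d)) (KI : Set (Vec d)) (hKI : IsSolvencyCone KI)
    (Ahat : Set (Lp (Vec d) p μ)) (hAhat : IsAcceptanceSet Ahat)
    (A : Set (Lp (Vec d) p μ))
    (hA : A = clM M (Ahat + (fun k => constLp μ d p k) '' (KI ∩ (M : Set (Vec d)))))
    (v : Vec d) (hv : v ∈ posDual KI) (X : Lp (Vec d) p μ) :
    scalarization v (RA M A) X = scalarization v (RA M Ahat) X := by
  have hconst_add : ∀ a b : Vec d, constLp μ d p (a + b) = constLp μ d p a + constLp μ d p b :=
    fun a b => map_add (MeasureTheory.Lp.const p μ) a b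
  have h0K : (0 : Vec d) ∈ KI := hKI.2.2.2.1 (fun i => le_refl 0)
  apply le_antisymm
  · -- R_Â ⊆ R_A, so inf over A ≤ inf over Â
    apply sInf_le_sInf
    apply image_mono
    rintro u ⟨huM, huA⟩
    refine ⟨huM, ?_⟩
    rw [hA]
    refine ⟨fun _ => 0, fun _ => M.zero_mem, tendsto_const_nhds, fun k => ?_⟩
    refine ⟨X + constLp μ d p u, huA, constLp μ d p 0, ⟨0, ⟨h0K, M.zero_mem⟩, rfl⟩, ?_⟩
    have : constLp μ d p ((0 : Vec d)) = 0 := map_zero (MeasureTheory.Lp.const p μ)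
    simp [this]
  · -- other direction
    apply le_sInf
    rintro y ⟨u, ⟨huM, huA⟩, rfl⟩
    rw [hA] at huA
    obtain ⟨w, hwM, hw0, hwA⟩ := huA
    -- for each k, extract Y ∈ Ahat and kk ∈ KI ∩ M
    have key : ∀ k : ℕ, ∃ m : Vec d, m ∈ M ∧ (X + constLp μ d p m ∈ Ahat) ∧
        dotp v m ≤ dotp v u + dotp v (w k) := by
      intro k
      obtain ⟨Y, hY, Z, ⟨kk, ⟨hkkK, hkkM⟩, rfl⟩, hsum⟩ := hwA k
      refine ⟨u + w k - kk, ?_, ?_, ?_⟩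
      · exact M.sub_mem (M.add_mem huM (hwM k)) hkkM
      · have h1 : X + constLp μ d p u + constLp μ d p (w k) = Y + constLp μ d p kk := hsum.symm
        have h2 : constLp μ d p (u + w k - kk)
            = constLp μ d p u + constLp μ d p (w k) - constLp μ d p kk := by
          rw [constLp_sub, constLp_add]
        have h3 : Y = (X + constLp μ d p u + constLp μ d p (w k)) - constLp μ d p kk :=
          eq_sub_iff_add_eq.mpr h1.symm
        have : X + constLp μ d p (u + w k - kk) = Y := by rw [h2, h3]; abel
        rw [this]; exact hY
      · rw [dotp_sub, dotp_add]
        have := hv kk hkkK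
        linarith
    choose m hmM hmA hmle using key
    -- sInf ≤ dotp v (m k) ≤ dotp v u + dotp v (w k) → dotp v u
    have hle : ∀ k, sInf ((fun u => ((dotp v u : ℝ) : EReal)) '' RA M Ahat X)
        ≤ ((dotp v u + dotp v (w k) : ℝ) : EReal) := by
      intro k
      refine le_trans (sInf_le ⟨m k, ⟨hmM k, hmA k⟩, rfl⟩) ?_
      exact EReal.coe_le_coe_iff.mpr (hmle k)
    have htend : Tendsto (fun k => ((dotp v u + dotp v (w k) : ℝ) : EReal)) atTop
        (nhds ((dotp v u : ℝ) : EReal)) := by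
      have h1 : Tendsto (fun k => dotp v u + dotp v (w k)) atTop (nhds (dotp v u)) := by
        have : Tendsto (fun k => dotp v (w k)) atTop (nhds 0) := by
          have hc : Continuous (dotp v) := by
            unfold dotp; exact continuous_finset_sum _ fun i _ => (continuous_const.mul (continuous_apply i))
          have := hc.continuousAt.tendsto.comp hw0
          simpa [dotp, Function.comp_def] using this
        simpa using tendsto_const_nhds.add this
      exact (continuous_coe_real_ereal.continuousAt.tendsto.comp h1)
    exact ge_of_tendsto htend (Eventually.of_forall hle)
end
end
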